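/- For every positive integer n with n ≡ 3 or 5 (mod 8), 3·t(1,3,4;n) = 4·N(1,3,4;2n+2). -/

import Mathlib

def tri (x : ℤ) : ℤ := x * (x + 1) / 2

noncomputable def N (a b c n : ℕ) : ℕ :=
  Nat.card {p : ℤ × ℤ × ℤ // (n : ℤ) = a * p.1 ^ 2 + b * p.2.1 ^ 2 + c * p.2.2 ^ 2}

noncomputable def t (a b c n : ℕ) : ℕ :=
  Nat.card {p : ℤ × ℤ × ℤ // (n : ℤ) = a * tri p.1 + b * tri p.2.1 + c * tri p.2.2}

noncomputable def T (a b c n : ℕ) : ℕ :=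
  Nat.card {p : ℕ × ℕ × ℕ // (n : ℤ) = a * tri p.1 + b * tri p.2.1 + c * tri p.2.2}

/-! ### Auxiliary sets -/

def SD (K : ℤ) := {p : ℤ × ℤ × ℤ // p.1^2 + 3*p.2.1^2 + p.2.2^2 = K}
def SB (K : ℤ) := {p : ℤ × ℤ × ℤ // p.1^2 + 3*p.2.1^2 + 4*p.2.2^2 = 4*K}
def SE (K : ℤ) := {p : ℤ × ℤ × ℤ // p.1^2 + 3*p.2.1^2 + p.2.2^2 = 4*K ∧ Odd p.2.2}
def SA (K : ℤ) := {p : ℤ × ℤ × ℤ //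
    p.1^2 + 3*p.2.1^2 + 4*p.2.2^2 = 16*K ∧ Odd p.1 ∧ Odd p.2.1 ∧ Odd p.2.2}

lemma cancel4 {a b : ℤ} (h : 4*a = 4*b) : a = b := by omega
lemma cancel8 {a b : ℤ} (h : 8*a = 8*b) : a = b := by omega

lemma tri2 (s : ℤ) : 2 * tri s = s * (s + 1) := by
  have h : (2:ℤ) ∣ s * (s + 1) := (Int.even_mul_succ_self s).two_dvd
  exact Int.mul_ediv_cancel' h

/-- In `SD K` (K ≡ 2,3 mod 4), one has p+q odd. -/
lemma keyD {K p q z : ℤ} (hK : K % 4 = 2 ∨ K % 4 = 3) (h : p^2 + 3*q^2 + z^2 = K) :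
    Odd (p + q) := by
  rcases Int.even_or_odd p with ⟨a, ha⟩ | ⟨a, ha⟩ <;>
    rcases Int.even_or_odd q with ⟨b, hb⟩ | ⟨b, hb⟩ <;>
      rcases Int.even_or_odd z with ⟨c, hc⟩ | ⟨c, hc⟩ <;> subst ha hb hc
  · exfalso
    obtain ⟨s, hs⟩ : ∃ s : ℤ, K = 4*s := ⟨a^2 + 3*b^2 + c^2, by linear_combination -h⟩
    omega
  · exfalso
    obtain ⟨s, hs⟩ : ∃ s : ℤ, K = 4*s + 1 := ⟨a^2 + 3*b^2 + c^2 + c, by linear_combination -h⟩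
    omega
  · exact ⟨a + b, by ring⟩
  · exact ⟨a + b, by ring⟩
  · exact ⟨a + b, by ring⟩
  · exact ⟨a + b, by ring⟩
  · exfalso
    obtain ⟨s, hs⟩ : ∃ s : ℤ, K = 4*s :=
      ⟨a^2 + a + 3*b^2 + 3*b + c^2 + 1, by linear_combination -h⟩
    omega
  · exfalso
    obtain ⟨s, hs⟩ : ∃ s : ℤ, K = 4*s + 1 :=
      ⟨a^2 + a + 3*b^2 + 3*b + c^2 + c + 1, by linear_combination -h⟩
    omega

/-- If a² + 3b² + w² = 4K with w odd, then a is even and b is odd. -/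
lemma keyE {K a b w : ℤ} (h : a^2 + 3*b^2 + w^2 = 4*K) (hw : Odd w) :
    Even a ∧ Odd b := by
  obtain ⟨c, hc⟩ := hw
  subst hc
  rcases Int.even_or_odd a with ⟨α, hα⟩ | ⟨α, hα⟩ <;>
    rcases Int.even_or_odd b with ⟨β, hβ⟩ | ⟨β, hβ⟩ <;> subst hα hβ
  · exfalso
    obtain ⟨s, hs⟩ : ∃ s : ℤ, 4*K = 4*s + 1 := ⟨α^2 + 3*β^2 + c^2 + c, by linear_combination -h⟩
    omega
  · exact ⟨⟨α, rfl⟩, ⟨β, rfl⟩⟩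
  · exfalso
    obtain ⟨s, hs⟩ : ∃ s : ℤ, 4*K = 4*s + 2 :=
      ⟨α^2 + α + 3*β^2 + c^2 + c, by linear_combination -h⟩
    omega
  · exfalso
    obtain ⟨s, hs⟩ : ∃ s : ℤ, 4*K = 4*s + 1 :=
      ⟨α^2 + α + 3*β^2 + 3*β + c^2 + c + 1, by linear_combination -h⟩
    omega

/-- If x² + 3y² + 4z² = 4K then x and y have the same parity. -/
lemma keyB {K x y z : ℤ} (h : x^2 + 3*y^2 + 4*z^2 = 4*K) :
    (Even x ∧ Even y) ∨ (Odd x ∧ Odd y) := by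
  rcases Int.even_or_odd x with ⟨α, hα⟩ | ⟨α, hα⟩ <;>
    rcases Int.even_or_odd y with ⟨β, hβ⟩ | ⟨β, hβ⟩ <;> subst hα hβ
  · exact Or.inl ⟨⟨α, rfl⟩, ⟨β, rfl⟩⟩
  · exfalso
    obtain ⟨s, hs⟩ : ∃ s : ℤ, 4*K = 4*s + 3 :=
      ⟨α^2 + 3*β^2 + 3*β + z^2, by linear_combination -h⟩
    omega
  · exfalso
    obtain ⟨s, hs⟩ : ∃ s : ℤ, 4*K = 4*s + 1 :=
      ⟨α^2 + α + 3*β^2 + z^2, by linear_combination -h⟩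
    omega
  · exact Or.inr ⟨⟨α, rfl⟩, ⟨β, rfl⟩⟩

/-! ### The 3:1 correspondence for `SB` -/

def fB (K : ℤ) : SD K × Option Bool → SB K
  | (⟨(p,q,z), hd⟩, none) => ⟨(2*p, 2*q, z), by dsimp only at hd ⊢; linear_combination 4*hd⟩
  | (⟨(p,q,z), hd⟩, some true) =>
      ⟨(p + 3*q, p - q, z), by dsimp only at hd ⊢; linear_combination 4*hd⟩
  | (⟨(p,q,z), hd⟩, some false) =>
      ⟨(p + 3*q, q - p, z), by dsimp only at hd ⊢; linear_combination 4*hd⟩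

lemma cardB (K : ℤ) (hK : K % 4 = 2 ∨ K % 4 = 3) :
    Nat.card (SB K) = 3 * Nat.card (SD K) := by
  have hbij : Function.Bijective (fB K) := by
    constructor
    · rintro ⟨⟨⟨p,q,z⟩, hd⟩, o⟩ ⟨⟨⟨p',q',z'⟩, hd'⟩, o'⟩ h
      obtain ⟨s, hs⟩ : Odd (p + q) := keyD hK hd
      obtain ⟨s', hs'⟩ : Odd (p' + q') := keyD hK hd'
      rcases o with _ | ⟨_ | _⟩ <;> rcases o' with _ | ⟨_ | _⟩ <;>
        simp only [fB] at h <;>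
        have h' := congrArg Subtype.val h <;>
        simp only [Prod.mk.injEq] at h' <;>
        first
          | (exfalso; omega)
          | (refine Prod.ext (Subtype.ext ?_) rfl
             simp only [Prod.mk.injEq]
             refine ⟨by omega, by omega, by omega⟩)
    · rintro ⟨⟨x, y, z⟩, hb⟩
      dsimp only at hb
      rcases keyB hb with ⟨⟨a, ha⟩, ⟨b, hbb⟩⟩ | ⟨⟨a, ha⟩, ⟨b, hbb⟩⟩
      · obtain rfl : x = 2*a := by omega
        obtain rfl : y = 2*b := by omega
        exact ⟨(⟨(a, b, z), cancel4 (by linear_combination hb)⟩, none), rfl⟩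
      · have h4 : 4 ∣ x - y ∨ 4 ∣ x + y := by omega
        rcases h4 with ⟨d, hd4⟩ | ⟨d, hd4⟩
        · obtain rfl : x = 4*d + y := by omega
          refine ⟨(⟨(d + y, d, z), cancel4 (by linear_combination hb)⟩, some true), ?_⟩
          simp only [fB]
          exact Subtype.ext (by simp only [Prod.mk.injEq]; refine ⟨by ring, by ring, by trivial⟩)
        · obtain rfl : x = 4*d - y := by omega
          refine ⟨(⟨(d - y, d, z), cancel4 (by linear_combination hb)⟩, some false), ?_⟩
          simp only [fB]
          exact Subtype.ext (by simp only [Prod.mk.injEq]; refine ⟨by ring, by ring, by trivial⟩)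
  have e := Nat.card_congr (Equiv.ofBijective (fB K) hbij)
  rw [Nat.card_prod] at e
  simp only [Nat.card_eq_fintype_card, Fintype.card_option, Fintype.card_bool] at e
  omega

/-! ### The 2:1 correspondence for `SE` -/

def fE (K : ℤ) (hK : K % 4 = 2 ∨ K % 4 = 3) : SD K × Bool → SE K
  | (⟨(p,q,z), hd⟩, true) =>
      ⟨(2*z, p - q, p + 3*q), by
        dsimp only at hd ⊢
        obtain ⟨s, hs⟩ : Odd (p + q) := keyD hK hd
        exact ⟨by linear_combination 4*hd, ⟨s + q, by omega⟩⟩⟩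
  | (⟨(p,q,z), hd⟩, false) =>
      ⟨(2*z, q - p, p + 3*q), by
        dsimp only at hd ⊢
        obtain ⟨s, hs⟩ : Odd (p + q) := keyD hK hd
        exact ⟨by linear_combination 4*hd, ⟨s + q, by omega⟩⟩⟩

lemma cardE (K : ℤ) (hK : K % 4 = 2 ∨ K % 4 = 3) :
    Nat.card (SE K) = 2 * Nat.card (SD K) := by
  have hbij : Function.Bijective (fE K hK) := by
    constructor
    · rintro ⟨⟨⟨p,q,z⟩, hd⟩, o⟩ ⟨⟨⟨p',q',z'⟩, hd'⟩, o'⟩ h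
      obtain ⟨s, hs⟩ : Odd (p + q) := keyD hK hd
      obtain ⟨s', hs'⟩ : Odd (p' + q') := keyD hK hd'
      rcases o with _ | _ <;> rcases o' with _ | _ <;>
        simp only [fE] at h <;>
        have h' := congrArg Subtype.val h <;>
        simp only [Prod.mk.injEq] at h' <;>
        first
          | (exfalso; omega)
          | (refine Prod.ext (Subtype.ext ?_) rfl
             simp only [Prod.mk.injEq]
             refine ⟨by omega, by omega, by omega⟩)
    · rintro ⟨⟨a, b, w⟩, he, hw⟩
      dsimp only at he hw
      obtain ⟨⟨α, hα⟩, hbodd⟩ := keyE he hw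
      obtain ⟨β, hβ⟩ := hbodd
      obtain ⟨c, hc⟩ := hw
      have h4 : 4 ∣ w - b ∨ 4 ∣ w + b := by omega
      rcases h4 with ⟨d, hd4⟩ | ⟨d, hd4⟩
      · obtain rfl : w = 4*d + b := by omega
        obtain rfl : a = 2*α := by omega
        refine ⟨(⟨(b + d, d, α), cancel4 (by linear_combination he)⟩, true), ?_⟩
        simp only [fE]
        exact Subtype.ext (by simp only [Prod.mk.injEq]; refine ⟨by trivial, by ring, by ring⟩)
      · obtain rfl : w = 4*d - b := by omega
        obtain rfl : a = 2*α := by omega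
        refine ⟨(⟨(d - b, d, α), cancel4 (by linear_combination he)⟩, false), ?_⟩
        simp only [fE]
        exact Subtype.ext (by simp only [Prod.mk.injEq]; refine ⟨by trivial, by ring, by ring⟩)
  have e := Nat.card_congr (Equiv.ofBijective (fE K hK) hbij)
  rw [Nat.card_prod] at e
  simp only [Nat.card_eq_fintype_card, Fintype.card_bool] at e
  omega

/-! ### The 2:1 correspondence for `SA` -/

def fA (K : ℤ) : SE K × Bool → SA K
  | (⟨(a,b,w), hE⟩, true) =>
      ⟨(a + 3*b, a - b, w), by
        obtain ⟨he, hw⟩ := hE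
        dsimp only at he hw ⊢
        obtain ⟨⟨α, hα⟩, ⟨β, hβ⟩⟩ := keyE he hw
        exact ⟨by linear_combination 4*he, ⟨α + 3*β + 1, by omega⟩, ⟨α - β - 1, by omega⟩, hw⟩⟩
  | (⟨(a,b,w), hE⟩, false) =>
      ⟨(a + 3*b, b - a, w), by
        obtain ⟨he, hw⟩ := hE
        dsimp only at he hw ⊢
        obtain ⟨⟨α, hα⟩, ⟨β, hβ⟩⟩ := keyE he hw
        exact ⟨by linear_combination 4*he, ⟨α + 3*β + 1, by omega⟩, ⟨β - α, by omega⟩, hw⟩⟩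

lemma cardA (K : ℤ) :
    Nat.card (SA K) = 2 * Nat.card (SE K) := by
  have hbij : Function.Bijective (fA K) := by
    constructor
    · rintro ⟨⟨⟨a,b,w⟩, he, hw⟩, o⟩ ⟨⟨⟨a',b',w'⟩, he', hw'⟩, o'⟩ h
      dsimp only at he hw he' hw'
      obtain ⟨⟨α, hα⟩, ⟨β, hβ⟩⟩ := keyE he hw
      obtain ⟨⟨α', hα'⟩, ⟨β', hβ'⟩⟩ := keyE he' hw'
      obtain ⟨α2, hα2⟩ := hα
      obtain ⟨α2', hα2'⟩ := hα'
      rcases o with _ | _ <;> rcases o' with _ | _ <;>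
        simp only [fA] at h <;>
        have h' := congrArg Subtype.val h <;>
        simp only [Prod.mk.injEq] at h' <;>
        first
          | (exfalso; omega)
          | (refine Prod.ext (Subtype.ext ?_) rfl
             simp only [Prod.mk.injEq]
             refine ⟨by omega, by omega, by omega⟩)
    · rintro ⟨⟨u, v, w⟩, hA, hu, hv, hw⟩
      dsimp only at hA hu hv hw
      obtain ⟨a0, ha0⟩ := hu
      obtain ⟨b0, hb0⟩ := hv
      have h4 : 4 ∣ u - v ∨ 4 ∣ u + v := by omega
      rcases h4 with ⟨d, hd4⟩ | ⟨d, hd4⟩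
      · obtain rfl : u = 4*d + v := by omega
        refine ⟨(⟨(v + d, d, w), ⟨cancel4 (by linear_combination hA), hw⟩⟩, true), ?_⟩
        simp only [fA]
        exact Subtype.ext (by simp only [Prod.mk.injEq]; refine ⟨by ring, by ring, by trivial⟩)
      · obtain rfl : u = 4*d - v := by omega
        refine ⟨(⟨(d - v, d, w), ⟨cancel4 (by linear_combination hA), hw⟩⟩, false), ?_⟩
        simp only [fA]
        exact Subtype.ext (by simp only [Prod.mk.injEq]; refine ⟨by ring, by ring, by trivial⟩)
  have e := Nat.card_congr (Equiv.ofBijective (fA K) hbij)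
  rw [Nat.card_prod] at e
  simp only [Nat.card_eq_fintype_card, Fintype.card_bool] at e
  omega

theorem stmt16 (n : ℕ) (hn : 0 < n) (h : n % 8 = 3 ∨ n % 8 = 5) :
    3 * t 1 3 4 n = 4 * N 1 3 4 (2 * n + 2) := by
  obtain ⟨k, hk⟩ : ∃ k : ℕ, n + 1 = 2 * k := ⟨(n + 1) / 2, by omega⟩
  set K : ℤ := (k : ℤ) with hKdef
  have hK : K % 4 = 2 ∨ K % 4 = 3 := by omega
  have hnK : (n : ℤ) = 2*K - 1 := by omega
  -- t side
  have e1 : t 1 3 4 n = Nat.card (SA K) := by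
    rw [t]
    refine Nat.card_congr (Equiv.ofBijective
      (fun x => ⟨(2*x.1.1 + 1, 2*x.1.2.1 + 1, 2*x.1.2.2 + 1), ?_⟩) ⟨?_, ?_⟩)
    · obtain ⟨⟨a, b, c⟩, ht⟩ := x
      push_cast at ht
      dsimp only at ht ⊢
      refine ⟨?_, ⟨a, rfl⟩, ⟨b, rfl⟩, ⟨c, rfl⟩⟩
      linear_combination -8*ht + 8*hnK - 4*tri2 a - 12*tri2 b - 16*tri2 c
    · rintro ⟨⟨a, b, c⟩, ht⟩ ⟨⟨a', b', c'⟩, ht'⟩ hh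
      have h' := congrArg Subtype.val hh
      simp only [Prod.mk.injEq] at h'
      exact Subtype.ext (by simp only [Prod.mk.injEq]; refine ⟨by omega, by omega, by omega⟩)
    · rintro ⟨⟨u, v, w⟩, hA, hu, hv, hw⟩
      dsimp only at hA hu hv hw
      obtain ⟨a, rfl⟩ := hu
      obtain ⟨b, rfl⟩ := hv
      obtain ⟨c, rfl⟩ := hw
      have hpf : (n : ℤ) = ↑(1:ℕ) * tri a + ↑(3:ℕ) * tri b + ↑(4:ℕ) * tri c := by
        push_cast
        refine cancel8 ?_
        linear_combination 8*hnK - hA - 4*tri2 a - 12*tri2 b - 16*tri2 c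
      exact ⟨⟨(a, b, c), hpf⟩, rfl⟩
  -- N side
  have e4 : N 1 3 4 (2 * n + 2) = Nat.card (SB K) := by
    rw [N]
    refine Nat.card_congr (Equiv.subtypeEquiv (Equiv.refl _) (fun p => ?_))
    simp only [Equiv.refl_apply]
    constructor
    · intro hp
      push_cast at hp
      linarith [hp, hnK]
    · intro hp
      push_cast
      linarith [hp, hnK]
  rw [e1, e4, cardA K, cardE K hK, cardB K hK]
  ring
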